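/- Let $(D, \{\prec_\alpha, \succ_\alpha, \curlyvee_{\alpha,\beta}\}_{\alpha,\beta\in\Omega})$ be an NS-family algebra. Then $D \otimes k\Omega$ with the operations $(x\otimes\alpha)\prec(y\otimes\beta) = (x\prec_\beta y)\otimes\alpha\beta$, $(x\otimes\alpha)\succ(y\otimes\beta) = (x\succ_\alpha y)\otimes\alpha\beta$, $(x\otimes\alpha)\curlyvee(y\otimes\beta) = (x\curlyvee_{\alpha,\beta}y)\otimes\alpha\beta$ is an NS-algebra. -/

import Mathlib

/-- An NS-family algebra `(D, {≺_α, ≻_α, ⋎_{α,β}})` induces an NS-algebra on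
`D ⊗ kΩ` (modelled as `Ω →₀ D`, with `single α x ↔ x ⊗ α`), where
`(x⊗α)≺(y⊗β) = (x ≺_β y)⊗αβ`, `(x⊗α)≻(y⊗β) = (x ≻_α y)⊗αβ`,
`(x⊗α)⋎(y⊗β) = (x ⋎_{α,β} y)⊗αβ`. -/
theorem NS_family_algebra_induces_NS_algebra
    {k Ω D : Type*} [Field k] [Semigroup Ω]
    [AddCommGroup D] [Module k D]
    (p s : Ω → D →ₗ[k] D →ₗ[k] D) (v : Ω → Ω → D →ₗ[k] D →ₗ[k] D)
    (hns1 : ∀ (α β : Ω) (x y z : D),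
      p β (p α x y) z = p (α * β) x (p β y z + s α y z + v α β y z))
    (hns2 : ∀ (α β : Ω) (x y z : D),
      p β (s α x y) z = s α x (p β y z))
    (hns3 : ∀ (α β : Ω) (x y z : D),
      s (α * β) (p β x y + s α x y + v α β x y) z = s α x (s β y z))
    (hns4 : ∀ (α β γ : Ω) (x y z : D),
      v (α * β) γ (p β x y + s α x y + v α β x y) z + p γ (v α β x y) z
        = s α x (v β γ y z) + v α (β * γ) x (p γ y z + s β y z + v β γ y z))
    (P S V : (Ω →₀ D) →ₗ[k] (Ω →₀ D) →ₗ[k] (Ω →₀ D))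
    (hP : ∀ (α β : Ω) (x y : D),
      P (Finsupp.single α x) (Finsupp.single β y) = Finsupp.single (α * β) (p β x y))
    (hS : ∀ (α β : Ω) (x y : D),
      S (Finsupp.single α x) (Finsupp.single β y) = Finsupp.single (α * β) (s α x y))
    (hV : ∀ (α β : Ω) (x y : D),
      V (Finsupp.single α x) (Finsupp.single β y) = Finsupp.single (α * β) (v α β x y)) :
    (∀ x y z : Ω →₀ D, P (P x y) z = P x (P y z + S y z + V y z)) ∧
    (∀ x y z : Ω →₀ D, P (S x y) z = S x (P y z)) ∧
    (∀ x y z : Ω →₀ D, S (P x y + S x y + V x y) z = S x (S y z)) ∧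
    (∀ x y z : Ω →₀ D,
      V (P x y + S x y + V x y) z + P (V x y) z
        = S x (V y z) + V x (P y z + S y z + V y z)) := by
  refine ⟨?_, ?_, ?_, ?_⟩ <;>
  · intro x y z
    induction x using Finsupp.induction_linear with
    | zero => simp
    | add f g hf hg =>
        simp only [map_add, LinearMap.add_apply] at hf hg ⊢
        linear_combination (norm := abel1) hf + hg
    | single α a =>
      induction y using Finsupp.induction_linear with
      | zero => simp
      | add f g hf hg =>
          simp only [map_add, LinearMap.add_apply] at hf hg ⊢
          linear_combination (norm := abel1) hf + hg
      | single β b =>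
        induction z using Finsupp.induction_linear with
        | zero => simp
        | add f g hf hg =>
            simp only [map_add, LinearMap.add_apply] at hf hg ⊢
            linear_combination (norm := abel1) hf + hg
        | single γ c =>
            simp only [hP, hS, hV, map_add, LinearMap.add_apply,
              ← Finsupp.single_add, mul_assoc]
            congr 1
            have H1 := hns1 β γ a b c
            have H2 := hns2 α γ a b c
            have H3 := hns3 α β a b c
            have H4 := hns4 α β γ a b c
            simp only [map_add, LinearMap.add_apply] at H1 H2 H3 H4
            first
            | linear_combination (norm := abel1) H1
            | linear_combination (norm := abel1) H2
            | linear_combination (norm := abel1) H3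
            | linear_combination (norm := abel1) H4
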